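/- Let ρ be the probability measure on ℝⁿ with strictly positive density ρ(z) = exp(−H(z)) with respect to Lebesgue measure, where H is continuously differentiable. Let φ : ℝⁿ → ℝⁿ be a continuously differentiable vector field, let λ₁,…,λ_m : ℝⁿ → [0,∞) be measurable with λ := Σᵢ λᵢ satisfying ∫ λ dρ < ∞, let Q₁,…,Q_m be Markov kernels on ℝⁿ, and define the mixture kernel Q(z,·) = Σᵢ (λᵢ(z)/λ(z)) Qᵢ(z,·) wherever λ(z) > 0. Let S : ℝⁿ → ℝⁿ be a measurable map whose pushforward of ρ equals ρ. Assume: (i) Σᵢ (λᵢ(S(z)) − λᵢ(z)) = div φ(z) − ⟨∇H(z), φ(z)⟩ for all z; (ii) for each i and every bounded measurable f, ∫∫ f(z′) λᵢ(z) Qᵢ(z,dz′) ρ(dz) = ∫ f(z′) λᵢ(S(z′)) ρ(dz′). Then for every compactly supported continuously differentiable f : ℝⁿ → ℝ, ∫ [ ⟨φ(z), ∇f(z)⟩ + λ(z) ∫ (f(z′) − f(z)) Q(z,dz′) ] ρ(dz) = 0, so ρ is invariant for the local PDMP. -/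

import Mathlib

open MeasureTheory ProbabilityTheory Real
open scoped RealInnerProductSpace
open scoped ENNReal NNReal

lemma pdmp_trace_eq_sum {n : ℕ} (T : EuclideanSpace ℝ (Fin n) →L[ℝ] EuclideanSpace ℝ (Fin n)) :
    LinearMap.trace ℝ _ T.toLinearMap = ∑ k, T (EuclideanSpace.single k 1) k := by
  rw [LinearMap.trace_eq_matrix_trace ℝ (EuclideanSpace.basisFun (Fin n) ℝ).toBasis,
    EuclideanSpace.basisFun_toBasis]
  simp [Matrix.trace, LinearMap.toMatrix_apply, Matrix.diag, PiLp.basisFun_apply,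
    PiLp.basisFun_repr]

lemma pdmp_clm_apply_eq_sum {n : ℕ} (T : EuclideanSpace ℝ (Fin n) →L[ℝ] ℝ)
    (x : EuclideanSpace ℝ (Fin n)) : T x = ∑ k, x k * T (EuclideanSpace.single k 1) := by
  conv_lhs => rw [← (EuclideanSpace.basisFun (Fin n) ℝ).sum_repr x]
  simp [EuclideanSpace.basisFun_repr, EuclideanSpace.basisFun_apply, mul_comm]

lemma pdmp_gradient_inner {n : ℕ} (f : EuclideanSpace ℝ (Fin n) → ℝ)
    (z v : EuclideanSpace ℝ (Fin n)) : ⟪gradient f z, v⟫ = fderiv ℝ f z v := by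
  simp [gradient, InnerProductSpace.toDual_symm_apply]

lemma pdmp_withDensity_integral {n : ℕ} (H : EuclideanSpace ℝ (Fin n) → ℝ) (hH : Continuous H)
    (g : EuclideanSpace ℝ (Fin n) → ℝ) :
    ∫ z, g z ∂(volume.withDensity (fun z => ENNReal.ofReal (Real.exp (-H z))))
      = ∫ z, Real.exp (-H z) * g z := by
  rw [show (fun z => ENNReal.ofReal (Real.exp (-H z)))
      = fun z => ((Real.exp (-H z)).toNNReal : ℝ≥0∞) from rfl,
    integral_withDensity_eq_integral_smul (by fun_prop) g]
  congr 1; ext z; simp [NNReal.smul_def, Real.coe_toNNReal _ (Real.exp_nonneg _)]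

/-- The drift integration-by-parts identity. -/
lemma pdmp_drift_ibp {n : ℕ} (H : EuclideanSpace ℝ (Fin n) → ℝ) (hH : ContDiff ℝ 1 H)
    (φv : EuclideanSpace ℝ (Fin n) → EuclideanSpace ℝ (Fin n)) (hφ : ContDiff ℝ 1 φv)
    (f : EuclideanSpace ℝ (Fin n) → ℝ) (hf : ContDiff ℝ 1 f) (hfc : HasCompactSupport f) :
    ∫ z, Real.exp (-H z) * fderiv ℝ f z (φv z)
      = ∫ z, Real.exp (-H z) * (f z * (fderiv ℝ H z (φv z)
          - LinearMap.trace ℝ _ (fderiv ℝ φv z).toLinearMap)) := by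
  classical
  have _dummy : True := trivial
  set w : EuclideanSpace ℝ (Fin n) → ℝ := fun z => Real.exp (-H z) with hw
  have hHd : Differentiable ℝ H := hH.differentiable one_ne_zero
  have hφd : Differentiable ℝ φv := hφ.differentiable one_ne_zero
  have hfd : Differentiable ℝ f := hf.differentiable one_ne_zero
  have hwc : Continuous w := by fun_prop
  have hwdiff : Differentiable ℝ w := fun z => (((hHd z).hasFDerivAt.neg).exp).differentiableAt
  set e : Fin n → EuclideanSpace ℝ (Fin n) := fun k => EuclideanSpace.single k 1 with he
  set L : (k : Fin n) → (EuclideanSpace ℝ (Fin n) →L[ℝ] ℝ) := fun k =>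
    (ContinuousLinearMap.proj k).comp
      ((EuclideanSpace.equiv (Fin n) ℝ).toContinuousLinearMap) with hL
  have hLapp : ∀ k (x : EuclideanSpace ℝ (Fin n)), L k x = x k := fun _ _ => rfl
  set g : Fin n → EuclideanSpace ℝ (Fin n) → ℝ := fun k z => φv z k * w z with hg
  have hgder : ∀ k z, HasFDerivAt (g k)
      (φv z k • (w z • -(fderiv ℝ H z)) + w z • ((L k).comp (fderiv ℝ φv z))) z := by
    intro k z
    have h1 : HasFDerivAt (fun z => φv z k) ((L k).comp (fderiv ℝ φv z)) z :=
      ((L k).hasFDerivAt).comp z (hφd z).hasFDerivAt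
    have h2 : HasFDerivAt w (w z • -(fderiv ℝ H z)) z := ((hHd z).hasFDerivAt.neg).exp
    exact h1.mul h2
  have key : ∀ k z, fderiv ℝ (g k) z (e k)
      = w z * (fderiv ℝ φv z (e k) k) - φv z k * w z * (fderiv ℝ H z (e k)) := by
    intro k z
    rw [(hgder k z).fderiv]
    simp [hLapp]
    ring
  have hgdiff : ∀ k, Differentiable ℝ (g k) := fun k z => (hgder k z).differentiableAt
  -- continuity of the relevant functions
  have hfderiv_cont : Continuous (fderiv ℝ f) := hf.continuous_fderiv one_ne_zero
  have hφderiv_cont : Continuous (fderiv ℝ φv) := hφ.continuous_fderiv one_ne_zero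
  have hHderiv_cont : Continuous (fderiv ℝ H) := hH.continuous_fderiv one_ne_zero
  have hcoord : ∀ k, Continuous (fun x : EuclideanSpace ℝ (Fin n) => x k) := by
    intro k; exact (continuous_apply k).comp (EuclideanSpace.equiv (Fin n) ℝ).continuous_toFun
  -- integrability
  have hint2 : ∀ k, Integrable (fun z => g k z * fderiv ℝ f z (e k)) volume := by
    intro k
    apply Continuous.integrable_of_hasCompactSupport
    · exact (((hcoord k).comp hφ.continuous).mul hwc).mul
        (hfderiv_cont.clm_apply continuous_const)
    · exact (hfc.fderiv_apply ℝ (e k)).mul_left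
  have hint1 : ∀ k, Integrable (fun z => fderiv ℝ (g k) z (e k) * f z) volume := by
    intro k
    apply Continuous.integrable_of_hasCompactSupport
    · have : Continuous (fun z => fderiv ℝ (g k) z (e k)) := by
        simp only [key]
        exact (hwc.mul ((hcoord k).comp (hφderiv_cont.clm_apply continuous_const))).sub
          ((((hcoord k).comp hφ.continuous).mul hwc).mul
            (hHderiv_cont.clm_apply continuous_const))
      exact this.mul hf.continuous
    · exact hfc.mul_left
  have hint3 : ∀ k, Integrable (fun z => g k z * f z) volume := by
    intro k
    exact Continuous.integrable_of_hasCompactSupport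
      ((((hcoord k).comp hφ.continuous).mul hwc).mul hf.continuous) hfc.mul_left
  have ibp : ∀ k, ∫ z, g k z * fderiv ℝ f z (e k) = - ∫ z, fderiv ℝ (g k) z (e k) * f z := by
    intro k
    exact integral_mul_fderiv_eq_neg_fderiv_mul_of_integrable (hint1 k) (hint2 k) (hint3 k)
      (fun x _ => hgdiff k x) (fun x _ => hfd x)
  calc ∫ z, w z * fderiv ℝ f z (φv z)
      = ∫ z, ∑ k, g k z * fderiv ℝ f z (e k) := by
        congr 1; ext z
        rw [pdmp_clm_apply_eq_sum (fderiv ℝ f z) (φv z), Finset.mul_sum]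
        exact Finset.sum_congr rfl fun k _ => by rw [hg]; ring
    _ = ∑ k, ∫ z, g k z * fderiv ℝ f z (e k) := integral_finset_sum _ (fun k _ => hint2 k)
    _ = ∑ k, - ∫ z, fderiv ℝ (g k) z (e k) * f z := Finset.sum_congr rfl fun k _ => ibp k
    _ = - ∫ z, ∑ k, fderiv ℝ (g k) z (e k) * f z := by
        rw [integral_finset_sum _ (fun k _ => hint1 k)]
        exact Finset.sum_neg_distrib _
    _ = ∫ z, w z * (f z * (fderiv ℝ H z (φv z)
          - LinearMap.trace ℝ _ (fderiv ℝ φv z).toLinearMap)) := by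
        rw [← integral_neg]
        congr 1; ext z
        have hd : ∑ k, fderiv ℝ φv z (e k) k
            = LinearMap.trace ℝ _ (fderiv ℝ φv z).toLinearMap := (pdmp_trace_eq_sum _).symm
        have ha : ∑ k, φv z k * fderiv ℝ H z (e k) = fderiv ℝ H z (φv z) :=
          (pdmp_clm_apply_eq_sum _ _).symm
        have expand : ∑ k, (w z * (fderiv ℝ φv z (e k) k)
              - φv z k * w z * (fderiv ℝ H z (e k))) * f z
            = w z * f z * (∑ k, fderiv ℝ φv z (e k) k)
              - w z * f z * (∑ k, φv z k * fderiv ℝ H z (e k)) := by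
          rw [Finset.mul_sum, Finset.mul_sum, ← Finset.sum_sub_distrib]
          exact Finset.sum_congr rfl fun k _ => by ring
        simp only [key]
        rw [expand, hd, ha]
        ring

/-- The divergence of a vector field on `ℝⁿ`, defined as the trace of its derivative. -/
noncomputable def pdmpDivergence {n : ℕ}
    (φ : EuclideanSpace ℝ (Fin n) → EuclideanSpace ℝ (Fin n))
    (z : EuclideanSpace ℝ (Fin n)) : ℝ :=
  LinearMap.trace ℝ (EuclideanSpace ℝ (Fin n)) (fderiv ℝ φ z).toLinearMap

/-- sufficient conditions for invariance of a PDMP (local methods):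
the event rate is `λ = Σᵢ λᵢ` and the event kernel is the mixture
`Q(z,·) = Σᵢ (λᵢ(z)/λ(z)) Qᵢ(z,·)` wherever `λ(z) > 0`. -/
theorem local_pdmp_generator_integral_zero {n m : ℕ}
    (H : EuclideanSpace ℝ (Fin n) → ℝ) (hH : ContDiff ℝ 1 H)
    (ρ : Measure (EuclideanSpace ℝ (Fin n)))
    (hρ : ρ = volume.withDensity (fun z => ENNReal.ofReal (Real.exp (-H z))))
    (hprob : IsProbabilityMeasure ρ)
    (φv : EuclideanSpace ℝ (Fin n) → EuclideanSpace ℝ (Fin n)) (hφ : ContDiff ℝ 1 φv)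
    (lam : Fin m → EuclideanSpace ℝ (Fin n) → ℝ) (hlam_meas : ∀ i, Measurable (lam i))
    (hlam_nonneg : ∀ i z, 0 ≤ lam i z)
    (hlam_int : Integrable (fun z => ∑ i, lam i z) ρ)
    (Qi : Fin m → Kernel (EuclideanSpace ℝ (Fin n)) (EuclideanSpace ℝ (Fin n)))
    [∀ i, IsMarkovKernel (Qi i)]
    (Q : Kernel (EuclideanSpace ℝ (Fin n)) (EuclideanSpace ℝ (Fin n))) [IsMarkovKernel Q]
    (hQmix : ∀ z, 0 < ∑ i, lam i z →
      (Q z : Measure (EuclideanSpace ℝ (Fin n)))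
        = ∑ i, (ENNReal.ofReal (lam i z / ∑ j, lam j z)) • (Qi i z : Measure (EuclideanSpace ℝ (Fin n))))
    (S : EuclideanSpace ℝ (Fin n) → EuclideanSpace ℝ (Fin n)) (hS_meas : Measurable S)
    (hS_pres : Measure.map S ρ = ρ)
    (hrate : ∀ z, ∑ i, (lam i (S z) - lam i z) = pdmpDivergence φv z - ⟪gradient H z, φv z⟫)
    (hQi : ∀ i, ∀ f : EuclideanSpace ℝ (Fin n) → ℝ, Measurable f → (∃ C, ∀ z, |f z| ≤ C) →
      ∫ z, lam i z * ∫ z', f z' ∂(Qi i z) ∂ρ = ∫ z', lam i (S z') * f z' ∂ρ) :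
    ∀ f : EuclideanSpace ℝ (Fin n) → ℝ, ContDiff ℝ 1 f → HasCompactSupport f →
      ∫ z, (⟪φv z, gradient f z⟫ + (∑ i, lam i z) * ∫ z', (f z' - f z) ∂(Q z)) ∂ρ = 0 := by
  intro f hf hfc
  obtain ⟨C, hC'⟩ := hfc.exists_bound_of_continuous hf.continuous
  have hC : ∀ z, |f z| ≤ C := fun z => by simpa [Real.norm_eq_abs] using hC' z
  have hfmeas : Measurable f := hf.continuous.measurable
  have hfint : ∀ (μ : Measure (EuclideanSpace ℝ (Fin n))), IsProbabilityMeasure μ →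
      Integrable f μ := by
    intro μ hμ
    exact Integrable.mono' (integrable_const C) hf.continuous.aestronglyMeasurable
      (ae_of_all _ fun z => by simpa [Real.norm_eq_abs] using hC z)
  -- the jump part rewritten without Q
  have hjump : ∀ z, (∑ i, lam i z) * ∫ z', (f z' - f z) ∂(Q z)
      = (∑ i, lam i z * ∫ z', f z' ∂(Qi i z)) - (∑ i, lam i z) * f z := by
    intro z
    rcases eq_or_lt_of_le (Finset.sum_nonneg fun i (_ : i ∈ Finset.univ) => hlam_nonneg i z)
      with h0 | hpos
    · have hz := (Finset.sum_eq_zero_iff_of_nonneg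
        (fun i (_ : i ∈ Finset.univ) => hlam_nonneg i z)).mp h0.symm
      rw [← h0, Finset.sum_eq_zero fun i hi => by rw [hz i hi, zero_mul]]
      ring
    · have hfQ : Integrable f (Q z) := hfint _ inferInstance
      rw [integral_sub hfQ (integrable_const _), integral_const, probReal_univ,
        one_smul, mul_sub]
      congr 1
      rw [hQmix z hpos, integral_finset_sum_measure
        (fun i _ => (hfint _ inferInstance).smul_measure ENNReal.ofReal_ne_top), Finset.mul_sum]
      refine Finset.sum_congr rfl fun i _ => ?_
      rw [integral_smul_measure,
        ENNReal.toReal_ofReal (div_nonneg (hlam_nonneg i z) hpos.le), smul_eq_mul, ← mul_assoc]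
      congr 1
      field_simp
  -- integrability of the pieces
  have hIQi_meas : ∀ i, StronglyMeasurable (fun z => ∫ z', f z' ∂(Qi i z)) := fun i =>
    (hf.continuous.stronglyMeasurable.comp_measurable measurable_snd).integral_kernel_prod_right'
  have hIQi_bd : ∀ i z, ‖∫ z', f z' ∂(Qi i z)‖ ≤ C := by
    intro i z
    calc ‖∫ z', f z' ∂(Qi i z)‖ ≤ C * ((Qi i z) Set.univ).toReal :=
          norm_integral_le_of_norm_le_const (ae_of_all _ fun z' => by
            simpa [Real.norm_eq_abs] using hC z')
      _ = C := by simp [measure_univ]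
  have hlam_i_int : ∀ i, Integrable (lam i) ρ := by
    intro i
    refine hlam_int.mono' (hlam_meas i).aestronglyMeasurable (ae_of_all _ fun z => ?_)
    rw [Real.norm_eq_abs, abs_of_nonneg (hlam_nonneg i z)]
    exact Finset.single_le_sum (fun j _ => hlam_nonneg j z) (Finset.mem_univ i)
  have hterm_int : ∀ i, Integrable (fun z => lam i z * ∫ z', f z' ∂(Qi i z)) ρ := by
    intro i
    refine Integrable.mono' ((hlam_i_int i).const_mul C)
      ((hlam_meas i).aestronglyMeasurable.mul (hIQi_meas i).aestronglyMeasurable)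
      (ae_of_all _ fun z => ?_)
    rw [norm_mul, Real.norm_eq_abs (lam i z), abs_of_nonneg (hlam_nonneg i z), mul_comm C]
    exact mul_le_mul_of_nonneg_left (hIQi_bd i z) (hlam_nonneg i z)
  have hΛf_int : Integrable (fun z => (∑ i, lam i z) * f z) ρ := by
    refine Integrable.mono' (hlam_int.const_mul C)
      ((Finset.measurable_sum _ fun i _ => hlam_meas i).aestronglyMeasurable.mul
        hf.continuous.aestronglyMeasurable) (ae_of_all _ fun z => ?_)
    rw [norm_mul, Real.norm_eq_abs (∑ i, lam i z),
      abs_of_nonneg (Finset.sum_nonneg fun i _ => hlam_nonneg i z), mul_comm C]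
    exact mul_le_mul_of_nonneg_left (by simpa [Real.norm_eq_abs] using hC z)
      (Finset.sum_nonneg fun i _ => hlam_nonneg i z)
  have hlamS_int : ∀ i, Integrable (fun z => lam i (S z)) ρ := by
    intro i
    have h1 : Integrable (lam i) (Measure.map S ρ) := by rw [hS_pres]; exact hlam_i_int i
    exact (integrable_map_measure (hlam_meas i).aestronglyMeasurable hS_meas.aemeasurable).mp h1
  have hlamSf_int : ∀ i, Integrable (fun z => lam i (S z) * f z) ρ := by
    intro i
    refine Integrable.mono' ((hlamS_int i).const_mul C)
      (((hlam_meas i).comp hS_meas).aestronglyMeasurable.mul hf.continuous.aestronglyMeasurable)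
      (ae_of_all _ fun z => ?_)
    rw [norm_mul, Real.norm_eq_abs (lam i (S z)), abs_of_nonneg (hlam_nonneg i (S z)), mul_comm C]
    exact mul_le_mul_of_nonneg_left (by simpa [Real.norm_eq_abs] using hC z) (hlam_nonneg i (S z))
  -- drift integrand: continuity, support, integrability
  have hgradf_cont : Continuous (gradient f) := by
    have h1 : gradient f = fun z =>
        (InnerProductSpace.toDual ℝ (EuclideanSpace ℝ (Fin n))).symm (fderiv ℝ f z) := rfl
    rw [h1]
    exact (InnerProductSpace.toDual ℝ _).symm.continuous.comp (hf.continuous_fderiv one_ne_zero)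
  have hgradf_supp : HasCompactSupport (gradient f) := by
    refine (hfc.fderiv ℝ).comp_left ?_
    simp
  have hdrift_cont : Continuous (fun z => ⟪φv z, gradient f z⟫) :=
    hφ.continuous.inner hgradf_cont
  have hdrift_supp : HasCompactSupport (fun z => ⟪φv z, gradient f z⟫) := by
    refine hgradf_supp.mono' ?_
    intro z hz
    apply subset_closure
    simp only [Function.mem_support, ne_eq] at hz ⊢
    intro h0
    exact hz (by rw [h0, inner_zero_right])
  obtain ⟨D, hD⟩ := hdrift_supp.exists_bound_of_continuous hdrift_cont
  have hdrift_int : Integrable (fun z => ⟪φv z, gradient f z⟫) ρ :=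
    Integrable.mono' (integrable_const D) hdrift_cont.aestronglyMeasurable (ae_of_all _ hD)
  -- value of the drift integral (integration by parts)
  have hdrift_val : ∫ z, ⟪φv z, gradient f z⟫ ∂ρ
      = ∫ z, f z * (⟪gradient H z, φv z⟫ - pdmpDivergence φv z) ∂ρ := by
    rw [hρ, pdmp_withDensity_integral H hH.continuous, pdmp_withDensity_integral H hH.continuous]
    calc ∫ z, Real.exp (-H z) * ⟪φv z, gradient f z⟫
        = ∫ z, Real.exp (-H z) * fderiv ℝ f z (φv z) := by
          congr 1; ext z; rw [real_inner_comm, pdmp_gradient_inner]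
      _ = ∫ z, Real.exp (-H z) * (f z * (fderiv ℝ H z (φv z)
            - LinearMap.trace ℝ _ (fderiv ℝ φv z).toLinearMap)) :=
          pdmp_drift_ibp H hH φv hφ f hf hfc
      _ = ∫ z, Real.exp (-H z) * (f z * (⟪gradient H z, φv z⟫ - pdmpDivergence φv z)) := by
          congr 1; ext z; rw [pdmp_gradient_inner]; rfl
  -- value of the jump integral
  have hjump_val : ∫ z, ((∑ i, lam i z * ∫ z', f z' ∂(Qi i z)) - (∑ i, lam i z) * f z) ∂ρ
      = ∫ z, -(f z * (⟪gradient H z, φv z⟫ - pdmpDivergence φv z)) ∂ρ := by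
    rw [integral_sub (integrable_finset_sum _ fun i _ => hterm_int i) hΛf_int,
      integral_finset_sum _ (fun i _ => hterm_int i)]
    rw [Finset.sum_congr rfl fun i _ => hQi i f hfmeas ⟨C, hC⟩,
      ← integral_finset_sum _ (fun i _ => hlamSf_int i),
      ← integral_sub (integrable_finset_sum _ fun i _ => hlamSf_int i) hΛf_int]
    congr 1; ext z
    rw [show (∑ i, lam i (S z) * f z) - (∑ i, lam i z) * f z
        = (∑ i, (lam i (S z) - lam i z)) * f z from by
      rw [Finset.sum_sub_distrib, sub_mul, Finset.sum_mul, Finset.sum_mul], hrate z]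
    ring
  -- put everything together
  calc ∫ z, (⟪φv z, gradient f z⟫ + (∑ i, lam i z) * ∫ z', (f z' - f z) ∂(Q z)) ∂ρ
      = ∫ z, (⟪φv z, gradient f z⟫
          + ((∑ i, lam i z * ∫ z', f z' ∂(Qi i z)) - (∑ i, lam i z) * f z)) ∂ρ := by
        exact integral_congr_ae (ae_of_all _ fun z => by beta_reduce; rw [hjump z])
    _ = (∫ z, ⟪φv z, gradient f z⟫ ∂ρ)
        + ∫ z, ((∑ i, lam i z * ∫ z', f z' ∂(Qi i z)) - (∑ i, lam i z) * f z) ∂ρ :=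
        integral_add hdrift_int ((integrable_finset_sum _ fun i _ => hterm_int i).sub hΛf_int)
    _ = 0 := by
        rw [hdrift_val, hjump_val, integral_neg]
        ring
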